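/- Let $h=(1,2,\dots,t,h_t,\dots,h_s)$ be an admissible Hilbert function of colength $n=\sum_i h_i$ with $n_l$ jumps of height $l$ for each $l\geq 2$. Then the dimension of the Gr\"obner cell of the lex-segment ideal $L=\operatorname{Lex}(h)$, computed as $\sum_{2\leq j+1\leq i\leq t+1}(d_j-\max(u_{i,j},0))$ where $U=(u_{i,j})$ is the degree matrix and $d_j=u_{j,j}$, equals $n-t-\sum_{l\geq 2} n_l\binom{l}{2}$. -/

import Mathlib

open Finset

lemma aux_card_le_pairs (s : Finset ℕ) :
    (((s ×ˢ s)).filter (fun p => p.1 ≤ p.2)).card = s.card.choose 2 + s.card := by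
  classical
  set X := s ×ˢ s with hX
  have hE : (X.filter (fun p => p.1 = p.2)).card = s.card := by
    have : X.filter (fun p => p.1 = p.2) = s.diag := by
      ext p
      simp only [mem_filter, hX, mem_product, Finset.mem_diag]
      constructor
      · rintro ⟨⟨h1, h2⟩, h3⟩; exact ⟨h1, h3⟩
      · rintro ⟨h1, h3⟩; exact ⟨⟨h1, h3 ▸ h1⟩, h3⟩
    rw [this, Finset.diag_card]
  have hXcard : X.card = s.card * s.card := by
    rw [hX, Finset.card_product]
  have hsplit : (X.filter (fun p => p.1 ≤ p.2)).card + (X.filter (fun p => ¬ p.1 ≤ p.2)).card = X.card :=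
    Finset.card_filter_add_card_filter_not _
  have hgt : (X.filter (fun p => ¬ p.1 ≤ p.2)).card = (X.filter (fun p => p.1 < p.2)).card := by
    apply Finset.card_nbij (fun p => p.swap)
    · rintro ⟨a, b⟩ hp
      simp only [mem_coe, mem_filter, hX, mem_product, not_le] at hp ⊢
      exact ⟨⟨hp.1.2, hp.1.1⟩, hp.2⟩
    · exact Prod.swap_injective.injOn
    · rintro ⟨a, b⟩ hp
      simp only [Set.mem_image, Finset.coe_filter, Set.mem_setOf_eq, mem_coe, mem_filter, hX,
        mem_product, not_le] at hp ⊢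
      exact ⟨(b, a), ⟨⟨hp.1.2, hp.1.1⟩, hp.2⟩, rfl⟩
  have hle_split : (X.filter (fun p => p.1 ≤ p.2)).card
      = (X.filter (fun p => p.1 < p.2)).card + (X.filter (fun p => p.1 = p.2)).card := by
    have : X.filter (fun p : ℕ × ℕ => p.1 ≤ p.2)
        = X.filter (fun p => p.1 < p.2) ∪ X.filter (fun p => p.1 = p.2) := by
      rw [← Finset.filter_or]
      apply Finset.filter_congr
      intro p _
      constructor
      · intro h; omega
      · intro h; omega
    rw [this, Finset.card_union_of_disjoint]
    rw [Finset.disjoint_left]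
    intro p hp hp'
    simp only [mem_filter] at hp hp'
    omega
  have hn2 : s.card ≤ s.card * s.card := by nlinarith [Nat.zero_le s.card]
  have hch : s.card.choose 2 = s.card * (s.card - 1) / 2 := Nat.choose_two_right _
  have heq : s.card * (s.card - 1) = s.card * s.card - s.card := by
    cases hc : s.card with
    | zero => simp
    | succ k => rw [Nat.succ_sub_one, Nat.mul_succ]; omega
  omega

lemma aux_Icc_range (g : ℕ → ℤ) (t : ℕ) : ∑ j ∈ Icc 1 t, g j = ∑ i ∈ range t, g (i + 1) := by
  induction t with
  | zero => simp
  | succ k ih => rw [Finset.sum_Icc_succ_top (by omega), ih, Finset.sum_range_succ]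

lemma aux_telescope (m : ℕ → ℤ) (hm0 : m 0 = 0) (t : ℕ) :
    ∑ j ∈ Icc 1 t, ((t : ℤ) + 1 - (j : ℤ)) * (m j - m (j - 1)) = ∑ j ∈ Icc 1 t, m j := by
  induction t with
  | zero => simp
  | succ k ih =>
    have htel : ∑ j ∈ Icc 1 k, (m j - m (j - 1)) = m k := by
      rw [aux_Icc_range (fun j => m j - m (j - 1)) k]
      simp only [Nat.add_sub_cancel]
      rw [Finset.sum_range_sub m k, hm0, sub_zero]
    rw [Finset.sum_Icc_succ_top (by omega : (1:ℕ) ≤ k + 1),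
        Finset.sum_Icc_succ_top (by omega : (1:ℕ) ≤ k + 1)]
    have expand : ∑ j ∈ Icc 1 k, ((((k:ℕ) + 1 : ℕ) : ℤ) + 1 - (j : ℤ)) * (m j - m (j - 1))
        = ∑ j ∈ Icc 1 k, (((k : ℤ) + 1 - (j : ℤ)) * (m j - m (j - 1)) + (m j - m (j - 1))) := by
      apply Finset.sum_congr rfl
      intro j _
      push_cast
      ring
    rw [expand, Finset.sum_add_distrib, ih, htel]
    push_cast
    ring

theorem stmt_6 (t : ℕ) (ht : 1 ≤ t) (m : ℕ → ℤ) (hm0 : m 0 = 0)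
    (hmono : ∀ i, i < t → m i < m (i + 1))
    (u : ℕ → ℕ → ℤ) (hu : ∀ i j, u i j = m j - m (i - 1) + (i : ℤ) - (j : ℤ))
    (d : ℕ → ℤ) (hd : ∀ j, d j = m j - m (j - 1))
    (h : ℕ → ℕ)
    (hh : ∀ i, h i = ((Finset.range t).filter
      (fun a => a ≤ i ∧ ((i - a : ℕ) : ℤ) < m (t - a))).card)
    (S : ℕ) (hS : S = t + (m t).toNat + 2)
    (n : ℕ) (hn : n = ∑ i ∈ Finset.range (S + 1), h i)
    (nl : ℕ → ℕ)
    (hnl : ∀ l, nl l = ((Finset.Icc 1 S).filter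
      (fun i => (h (i - 1) : ℤ) - (h i : ℤ) = (l : ℤ))).card) :
    ∑ p ∈ (Finset.Icc 1 (t + 1) ×ˢ Finset.Icc 1 t).filter (fun p => p.2 + 1 ≤ p.1),
        (d p.2 - max (u p.1 p.2) 0)
      = (n : ℤ) - (t : ℤ) - ∑ l ∈ Finset.Icc 2 S, (nl l : ℤ) * (Nat.choose l 2 : ℤ) := by
  classical
  obtain ⟨e, he_def⟩ : ∃ e : ℕ → ℤ, ∀ k, e k = m k + (t : ℤ) - (k : ℤ) :=
    ⟨_, fun k => rfl⟩
  -- step inequalities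
  have hstep : ∀ k, k ≤ t → ∀ j, j ≤ k → m j + ((k : ℤ) - (j : ℤ)) ≤ m k := by
    intro k
    induction k with
    | zero =>
      intro _ j hj
      have : j = 0 := by omega
      subst this; simp
    | succ k ih =>
      intro hk j hj
      rcases Nat.lt_or_ge j (k + 1) with hlt | hge
      · have h1 := ih (by omega) j (by omega)
        have h2 := hmono k (by omega)
        push_cast at h1 ⊢
        omega
      · have : j = k + 1 := by omega
        subst this; simp
  have hmk : ∀ k, k ≤ t → (k : ℤ) ≤ m k := by
    intro k hk
    have := hstep k hk 0 (Nat.zero_le _)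
    rw [hm0] at this
    push_cast at this
    omega
  have he_ge_t : ∀ k, 1 ≤ k → k ≤ t → (t : ℤ) ≤ e k := by
    intro k h1 h2
    have := hmk k h2
    rw [he_def]
    omega
  have he_le : ∀ k, 1 ≤ k → k ≤ t → e k ≤ m t := by
    intro k h1 h2
    have := hstep t le_rfl k h2
    rw [he_def]
    omega
  have he_mono : ∀ j k, 1 ≤ j → j ≤ k → k ≤ t → e j ≤ e k := by
    intro j k h1 h2 h3
    have := hstep k h3 j h2
    rw [he_def, he_def]
    push_cast
    omega
  have hmtc : ((m t).toNat : ℤ) = m t := Int.toNat_of_nonneg (le_trans (by positivity) (hmk t le_rfl))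
  -- the sets A, F, D
  obtain ⟨A, hA_def⟩ : ∃ A : ℕ → Finset ℕ, ∀ i, A i
      = (Icc 1 t).filter (fun k : ℕ => (t : ℤ) - (k : ℤ) ≤ (i : ℤ) ∧ (i : ℤ) < e k) :=
    ⟨_, fun i => rfl⟩
  obtain ⟨F, hF_def⟩ : ∃ F : ℕ → Finset ℕ, ∀ i, F i
      = (Icc 1 t).filter (fun k => e k = (i : ℤ)) := ⟨_, fun i => rfl⟩
  obtain ⟨D, hD_def⟩ : ∃ D : ℕ → Finset ℕ, ∀ i, D i
      = (Icc 1 t).filter (fun k : ℕ => (t : ℤ) - (k : ℤ) = (i : ℤ)) := ⟨_, fun i => rfl⟩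
  -- h i = (A i).card
  have hA : ∀ i, h i = (A i).card := by
    intro i
    rw [hh, hA_def]
    apply Finset.card_nbij' (fun a => t - a) (fun k => t - k)
    · intro a ha
      simp only [mem_coe, mem_filter, mem_range, mem_Icc] at ha ⊢
      obtain ⟨hat, hai, him⟩ := ha
      have hek := he_def (t - a)
      refine ⟨⟨by omega, by omega⟩, by omega, by omega⟩
    · intro k hk
      simp only [mem_coe, mem_filter, mem_range, mem_Icc] at hk ⊢
      obtain ⟨⟨hk1, hk2⟩, hki, hke⟩ := hk
      have hek := he_def k
      have htk : t - (t - k) = k := by omega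
      rw [htk]
      refine ⟨by omega, by omega, by omega⟩
    · intro a ha
      simp only [mem_coe, mem_filter, mem_range] at ha ⊢
      omega
    · intro k hk
      simp only [mem_coe, mem_filter, mem_Icc] at hk ⊢
      omega
  -- difference sets
  have hAd1 : ∀ i, 1 ≤ i → A (i - 1) \ A i = F i := by
    intro i hi
    ext k
    rw [hA_def, hA_def, hF_def]
    simp only [mem_sdiff, mem_filter, mem_Icc, not_and, not_lt]
    by_cases hk : 1 ≤ k ∧ k ≤ t
    · have hget := he_ge_t k hk.1 hk.2
      constructor
      · rintro ⟨⟨⟨h1, h2⟩, h3, h4⟩, h5⟩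
        have h6 := h5 ⟨h1, h2⟩ (by omega)
        exact ⟨⟨h1, h2⟩, by omega⟩
      · rintro ⟨⟨h1, h2⟩, h3⟩
        refine ⟨⟨⟨h1, h2⟩, by omega, by omega⟩, ?_⟩
        intro _ _
        omega
    · constructor
      · rintro ⟨⟨⟨h1, h2⟩, _⟩, _⟩; exact absurd ⟨h1, h2⟩ hk
      · rintro ⟨⟨h1, h2⟩, _⟩; exact absurd ⟨h1, h2⟩ hk
  have hAd2 : ∀ i, 1 ≤ i → A i \ A (i - 1) = D i := by
    intro i hi
    ext k
    rw [hA_def, hA_def, hD_def]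
    simp only [mem_sdiff, mem_filter, mem_Icc, not_and, not_lt]
    by_cases hk : 1 ≤ k ∧ k ≤ t
    · have hget := he_ge_t k hk.1 hk.2
      constructor
      · rintro ⟨⟨⟨h1, h2⟩, h3, h4⟩, h5⟩
        by_cases h6 : (t : ℤ) - (k : ℤ) ≤ ((i - 1 : ℕ) : ℤ)
        · have := h5 ⟨h1, h2⟩ h6
          omega
        · exact ⟨⟨h1, h2⟩, by omega⟩
      · rintro ⟨⟨h1, h2⟩, h3⟩
        refine ⟨⟨⟨h1, h2⟩, by omega, by omega⟩, ?_⟩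
        intro _ h4
        omega
    · constructor
      · rintro ⟨⟨⟨h1, h2⟩, _⟩, _⟩; exact absurd ⟨h1, h2⟩ hk
      · rintro ⟨⟨h1, h2⟩, _⟩; exact absurd ⟨h1, h2⟩ hk
  have hdiff : ∀ i, 1 ≤ i → (h (i - 1) : ℤ) - (h i : ℤ) = ((F i).card : ℤ) - ((D i).card : ℤ) := by
    intro i hi
    rw [hA, hA]
    have e1 := Finset.card_sdiff_add_card_inter (A (i - 1)) (A i)
    have e2 := Finset.card_sdiff_add_card_inter (A i) (A (i - 1))
    rw [Finset.inter_comm] at e2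
    rw [hAd1 i hi] at e1
    rw [hAd2 i hi] at e2
    push_cast
    omega
  have hFcard_le : ∀ i, (F i).card ≤ t := by
    intro i
    rw [hF_def]
    calc ((Icc 1 t).filter _).card ≤ (Icc 1 t).card := Finset.card_filter_le _ _
    _ = t := by rw [Nat.card_Icc]; omega
  have hFzero : ∀ i, i < t → F i = ∅ := by
    intro i hi
    rw [hF_def]
    apply Finset.filter_false_of_mem
    intro k hk
    rw [mem_Icc] at hk
    have := he_ge_t k hk.1 hk.2
    omega
  have hFge : ∀ i, (F i).Nonempty → t ≤ i := by
    intro i hi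
    by_contra hc
    rw [hFzero i (by omega)] at hi
    exact Finset.not_nonempty_empty hi
  have hDcard : ∀ i, 1 ≤ i → (D i).card = if i < t then 1 else 0 := by
    intro i hi
    rw [hD_def]
    split_ifs with hit
    · rw [show (Icc 1 t).filter (fun k : ℕ => (t : ℤ) - (k : ℤ) = (i : ℤ)) = {t - i} by
        ext k; simp only [mem_filter, mem_Icc, Finset.mem_singleton]; omega]
      rfl
    · rw [Finset.card_eq_zero]
      apply Finset.filter_false_of_mem
      intro k hk
      rw [mem_Icc] at hk
      omega
  -- nl description
  have hnl2 : ∀ l, l ∈ Icc 2 S → nl l = ((Icc 1 S).filter (fun i => (F i).card = l)).card := by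
    intro l hl
    rw [mem_Icc] at hl
    rw [hnl]
    congr 1
    apply Finset.filter_congr
    intro i hi
    rw [mem_Icc] at hi
    rw [hdiff i hi.1, hDcard i hi.1]
    split_ifs with hit
    · have hc0 : (F i).card = 0 := by rw [hFzero i hit]; rfl
      rw [hc0]
      constructor
      · intro hc; exfalso; omega
      · intro hc; exfalso; omega
    · constructor
      · intro hc; omega
      · intro hc; omega
  -- colength
  have hn2 : (n : ℤ) = ∑ k ∈ Icc 1 t, m k := by
    have hncalc : n = ∑ k ∈ Icc 1 t, ((e k).toNat - (t - k)) := by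
      rw [hn]
      have hcf : ∀ i : ℕ, h i = ∑ k ∈ Icc 1 t,
          if (t : ℤ) - (k : ℤ) ≤ (i : ℤ) ∧ (i : ℤ) < e k then 1 else 0 := by
        intro i
        rw [hA i, hA_def, Finset.card_filter]
      rw [Finset.sum_congr rfl (fun i _ => hcf i), Finset.sum_comm]
      apply Finset.sum_congr rfl
      intro k hk
      rw [mem_Icc] at hk
      rw [← Finset.card_filter]
      have hek := he_def k
      have hge := he_ge_t k hk.1 hk.2
      have hle := he_le k hk.1 hk.2
      rw [show (range (S + 1)).filter
            (fun i : ℕ => (t : ℤ) - (k : ℤ) ≤ (i : ℤ) ∧ (i : ℤ) < e k)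
          = Ico (t - k) ((e k).toNat) by
        ext i
        simp only [mem_filter, mem_range, mem_Ico]
        omega]
      rw [Nat.card_Ico]
    rw [hncalc, Nat.cast_sum]
    apply Finset.sum_congr rfl
    intro k hk
    rw [mem_Icc] at hk
    have hek := he_def k
    have hmk' := hmk k hk.2
    omega
  -- nl-sum
  have hnlsum : ∑ l ∈ Icc 2 S, (nl l : ℤ) * (Nat.choose l 2 : ℤ)
      = ∑ i ∈ Icc 1 S, ((Nat.choose (F i).card 2 : ℕ) : ℤ) := by
    suffices Hnat : ∑ l ∈ Icc 2 S, nl l * Nat.choose l 2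
        = ∑ i ∈ Icc 1 S, Nat.choose (F i).card 2 by
      exact_mod_cast Hnat
    have step1 : ∀ l ∈ Icc 2 S, nl l * Nat.choose l 2
        = ∑ i ∈ (Icc 1 S).filter (fun i => (F i).card = l), Nat.choose (F i).card 2 := by
      intro l hl
      rw [hnl2 l hl]
      rw [Finset.sum_congr rfl (fun i hi => by rw [(Finset.mem_filter.mp hi).2])]
      rw [Finset.sum_const, smul_eq_mul]
    rw [Finset.sum_congr rfl step1]
    have hmapsto : ∀ i ∈ (Icc 1 S).filter (fun i => (F i).card ∈ Icc 2 S),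
        (F i).card ∈ Icc 2 S := fun i hi => (mem_filter.mp hi).2
    have hfib := Finset.sum_fiberwise_of_maps_to hmapsto (fun i => Nat.choose (F i).card 2)
    have hff : ∀ l ∈ Icc 2 S,
        (Icc 1 S).filter (fun i => (F i).card = l)
        = ((Icc 1 S).filter (fun i => (F i).card ∈ Icc 2 S)).filter
            (fun i => (F i).card = l) := by
      intro l hl
      rw [Finset.filter_filter]
      apply Finset.filter_congr
      intro i _
      constructor
      · intro h2; exact ⟨h2 ▸ hl, h2⟩
      · rintro ⟨_, h2⟩; exact h2
    rw [Finset.sum_congr rfl (fun l hl => by rw [hff l hl])]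
    rw [hfib]
    apply Finset.sum_filter_of_ne
    intro i hi hne
    rw [mem_Icc]
    have h2 : 2 ≤ (F i).card := by
      by_contra hcon
      exact hne (Nat.choose_eq_zero_of_lt (by omega))
    exact ⟨h2, le_trans (hFcard_le i) (by omega)⟩
  -- Sum1
  have hSum1 : ∑ p ∈ (Finset.Icc 1 (t + 1) ×ˢ Finset.Icc 1 t).filter (fun p => p.2 + 1 ≤ p.1),
      d p.2 = ∑ j ∈ Icc 1 t, m j := by
    rw [Finset.sum_filter, Finset.sum_product, Finset.sum_comm, ← aux_telescope m hm0 t]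
    apply Finset.sum_congr rfl
    intro j hj
    rw [mem_Icc] at hj
    rw [← Finset.sum_filter,
      show (Icc 1 (t + 1)).filter (fun i => j + 1 ≤ i) = Icc (j + 1) (t + 1) by
        ext i; simp only [mem_filter, mem_Icc]; omega,
      show (∑ a ∈ Icc (j + 1) (t + 1), d ((a, j).2)) = ∑ a ∈ Icc (j + 1) (t + 1), d j
        from Finset.sum_congr rfl (fun a _ => rfl),
      Finset.sum_const, Nat.card_Icc, nsmul_eq_mul, hd j]
    congr 1
    push_cast
    omega
  -- Sum2
  have hSum2 : ∑ p ∈ (Finset.Icc 1 (t + 1) ×ˢ Finset.Icc 1 t).filter (fun p => p.2 + 1 ≤ p.1),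
      max (u p.1 p.2) 0
      = ((∑ i ∈ Icc 1 S, (Nat.choose (F i).card 2 + (F i).card) : ℕ) : ℤ) := by
    have hmax : ∀ p ∈ (Finset.Icc 1 (t + 1) ×ˢ Finset.Icc 1 t).filter (fun p => p.2 + 1 ≤ p.1),
        max (u p.1 p.2) 0 = if e (p.1 - 1) = e p.2 then (1 : ℤ) else 0 := by
      rintro ⟨i, j⟩ hp
      simp only [mem_filter, mem_product, mem_Icc] at hp
      obtain ⟨⟨⟨hi1, hi2⟩, hj1, hj2⟩, hji⟩ := hp
      show max (u i j) 0 = if e (i - 1) = e j then (1 : ℤ) else 0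
      have hu' := hu i j
      have he1 := he_def j
      have he2 := he_def (i - 1)
      have hmono' := he_mono j (i - 1) hj1 (by omega) (by omega)
      split_ifs with hcond
      · have h1 : u i j = 1 := by rw [hu']; omega
        rw [h1]
        simp
      · have h1 : u i j ≤ 0 := by rw [hu']; omega
        exact max_eq_right h1
    rw [Finset.sum_congr rfl hmax, Finset.sum_boole]
    have hcard1 : (((Finset.Icc 1 (t + 1) ×ˢ Finset.Icc 1 t).filter
          (fun p => p.2 + 1 ≤ p.1)).filter (fun p => e (p.1 - 1) = e p.2)).card
        = (((Icc 1 t ×ˢ Icc 1 t).filter (fun p => p.1 ≤ p.2)).filter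
          (fun p => e p.1 = e p.2)).card := by
      apply Finset.card_nbij' (fun p => (p.2, p.1 - 1)) (fun p => (p.2 + 1, p.1))
      · rintro ⟨i, j⟩ hp
        simp only [mem_coe, mem_filter, mem_product, mem_Icc] at hp ⊢
        obtain ⟨⟨⟨⟨hi1, hi2⟩, hj1, hj2⟩, hji⟩, hee⟩ := hp
        exact ⟨⟨⟨⟨by omega, by omega⟩, by omega, by omega⟩, by omega⟩, hee.symm⟩
      · rintro ⟨a, b⟩ hp
        simp only [mem_coe, mem_filter, mem_product, mem_Icc] at hp ⊢
        obtain ⟨⟨⟨⟨ha1, ha2⟩, hb1, hb2⟩, hab⟩, hee⟩ := hp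
        refine ⟨⟨⟨⟨by omega, by omega⟩, by omega, by omega⟩, by omega⟩, ?_⟩
        rw [Nat.add_sub_cancel]
        exact hee.symm
      · rintro ⟨i, j⟩ hp
        simp only [mem_coe, mem_filter, mem_product, mem_Icc] at hp
        show (i - 1 + 1, j) = (i, j)
        have hone : i - 1 + 1 = i := by omega
        rw [hone]
      · rintro ⟨a, b⟩ _
        show (a, b + 1 - 1) = (a, b)
        rw [Nat.add_sub_cancel]
    rw [hcard1]
    have hmapsto2 : ∀ p ∈ ((Icc 1 t ×ˢ Icc 1 t).filter (fun p => p.1 ≤ p.2)).filter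
        (fun p => e p.1 = e p.2), (e p.1).toNat ∈ Icc 1 S := by
      rintro ⟨a, b⟩ hp
      simp only [mem_filter, mem_product, mem_Icc] at hp ⊢
      have h1 := he_ge_t a hp.1.1.1.1 hp.1.1.1.2
      have h2 := he_le a hp.1.1.1.1 hp.1.1.1.2
      omega
    rw [Finset.card_eq_sum_card_fiberwise hmapsto2]
    have hfibeq : ∀ b ∈ Icc 1 S,
        ((((Icc 1 t ×ˢ Icc 1 t).filter (fun p => p.1 ≤ p.2)).filter
          (fun p => e p.1 = e p.2)).filter (fun p => (e p.1).toNat = b))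
        = (F b ×ˢ F b).filter (fun p => p.1 ≤ p.2) := by
      intro b hb
      rw [mem_Icc] at hb
      ext ⟨x, y⟩
      rw [hF_def]
      simp only [mem_filter, mem_product, mem_Icc]
      by_cases hx : (1 ≤ x ∧ x ≤ t) ∧ (1 ≤ y ∧ y ≤ t)
      · have h1 := he_ge_t x hx.1.1 hx.1.2
        have h2 := he_ge_t y hx.2.1 hx.2.2
        constructor
        · rintro ⟨⟨⟨_, hxy⟩, hexy⟩, htn⟩
          refine ⟨⟨⟨hx.1, by omega⟩, hx.2, by omega⟩, hxy⟩
        · rintro ⟨⟨⟨_, hex⟩, _, hey⟩, hxy⟩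
          refine ⟨⟨⟨⟨hx.1, hx.2⟩, hxy⟩, by omega⟩, by omega⟩
      · constructor
        · rintro ⟨⟨⟨⟨h1, h2⟩, _⟩, _⟩, _⟩; exact absurd ⟨h1, h2⟩ hx
        · rintro ⟨⟨⟨h1, _⟩, h2, _⟩, _⟩; exact absurd ⟨h1, h2⟩ hx
    rw [Finset.sum_congr rfl (fun b hb => by rw [hfibeq b hb])]
    have hfc : ∀ b ∈ Icc 1 S, ((F b ×ˢ F b).filter (fun p => p.1 ≤ p.2)).card
        = Nat.choose (F b).card 2 + (F b).card := fun b _ => aux_card_le_pairs (F b)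
    rw [Finset.sum_congr rfl hfc]
  have hfibt : ∑ i ∈ Icc 1 S, (F i).card = t := by
    have hmapsto3 : ∀ k ∈ Icc 1 t, (e k).toNat ∈ Icc 1 S := by
      intro k hk
      rw [mem_Icc] at hk ⊢
      have h1 := he_ge_t k hk.1 hk.2
      have h2 := he_le k hk.1 hk.2
      omega
    have hcard := Finset.card_eq_sum_card_fiberwise hmapsto3
    have hIcct : (Icc 1 t).card = t := by rw [Nat.card_Icc]; omega
    rw [hIcct] at hcard
    have hsetq : ∀ i ∈ Icc 1 S, (F i).card
        = ((Icc 1 t).filter (fun a => (e a).toNat = i)).card := by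
      intro i hi
      congr 1
      rw [hF_def]
      apply Finset.filter_congr
      intro k hk
      rw [mem_Icc] at hk
      have h1 := he_ge_t k hk.1 hk.2
      omega
    rw [Finset.sum_congr rfl hsetq]
    exact hcard.symm
  rw [Finset.sum_sub_distrib, hSum1, hSum2, hn2, hnlsum]
  push_cast
  rw [Finset.sum_add_distrib]
  have hfibt' : (∑ i ∈ Icc 1 S, ((F i).card : ℤ)) = (t : ℤ) := by exact_mod_cast hfibt
  rw [hfibt']
  ring
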